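/- Let p be an odd prime, α ∈ ℚ_p, and let [0, b_1, b_2, ...] be its p-adic continued fraction with convergents A_i/B_i. If β ∈ ℚ_p has a p-adic continued fraction expansion whose first i+1 partial quotients coincide with those of α, then |α − β|_p < 1/|B_i|_p². -/

import Mathlib

/-- if β has a p-adic continued fraction expansion whose first i+1
partial quotients coincide with those of α = [0, b_1, b_2, ...], then
|α − β|_p < 1/|B_i|_p².  The common beginning is expressed through the complete
quotients γ, γ' (with |γ|_p, |γ'|_p ≥ p) via the standard formula
α = (γ A_i + A_{i-1})/(γ B_i + B_{i-1}) and similarly for β. -/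
theorem stmt_9 (p : ℕ) [Fact p.Prime] (hodd : Odd p)
    (α β : ℚ_[p]) (b A B : ℤ → ℚ_[p])
    (hb0 : b 0 = 0)
    (hb : ∀ j : ℤ, 1 ≤ j → (p : ℝ) ≤ ‖b j‖)
    (hAm2 : A (-2) = 0) (hAm1 : A (-1) = 1)
    (hBm2 : B (-2) = 1) (hBm1 : B (-1) = 0)
    (hArec : ∀ j : ℤ, 0 ≤ j → A j = b j * A (j - 1) + A (j - 2))
    (hBrec : ∀ j : ℤ, 0 ≤ j → B j = b j * B (j - 1) + B (j - 2))
    (i : ℤ) (hi : 0 ≤ i)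
    (γ γ' : ℚ_[p]) (hγ : (p : ℝ) ≤ ‖γ‖) (hγ' : (p : ℝ) ≤ ‖γ'‖)
    (hα : α = (γ * A i + A (i - 1)) / (γ * B i + B (i - 1)))
    (hβ : β = (γ' * A i + A (i - 1)) / (γ' * B i + B (i - 1))) :
    ‖α - β‖ < (‖B i‖ ^ 2)⁻¹ := by
  have hp : (1:ℝ) < p := by exact_mod_cast (Fact.out : p.Prime).one_lt
  have hp0 : (0:ℝ) < p := lt_trans one_pos hp
  -- norms of B, by induction on ℕ
  have hBnat : ∀ n : ℕ, 1 ≤ ‖B (n:ℤ)‖ ∧ (p:ℝ) * ‖B ((n:ℤ)-1)‖ ≤ ‖B (n:ℤ)‖ := by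
    intro n
    induction n with
    | zero =>
      have h0 : B 0 = 1 := by
        have h := hBrec 0 le_rfl
        norm_num [hb0] at h
        rw [h]
        norm_num [hBm2]
      norm_num [h0, hBm1]
    | succ n ih =>
      obtain ⟨ih1, ih2⟩ := ih
      set j : ℤ := (n : ℤ)
      have hjnn : 0 ≤ j := Int.ofNat_nonneg n
      have hrec := hBrec (j+1) (by linarith)
      have e1 : j + 1 - 1 = j := by ring
      have e2 : j + 1 - 2 = j - 1 := by ring
      rw [e1, e2] at hrec
      have hbj : (p:ℝ) ≤ ‖b (j+1)‖ := hb _ (by linarith)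
      have hBj0 : (0:ℝ) < ‖B j‖ := lt_of_lt_of_le one_pos ih1
      have hmul : (p:ℝ) * ‖B j‖ ≤ ‖b (j+1) * B j‖ := by
        rw [norm_mul]; exact mul_le_mul_of_nonneg_right hbj (norm_nonneg _)
      have hlt : ‖B (j-1)‖ < ‖b (j+1) * B j‖ := by
        have : ‖B (j-1)‖ < (p:ℝ) * ‖B j‖ := by nlinarith [norm_nonneg (B (j-1))]
        exact lt_of_lt_of_le this hmul
      have hnorm : ‖B (j+1)‖ = ‖b (j+1) * B j‖ := by
        rw [hrec, Padic.add_eq_max_of_ne hlt.ne']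
        exact max_eq_left hlt.le
      have e3 : ((n+1 : ℕ) : ℤ) = j + 1 := by push_cast; ring
      rw [e3, e1, hnorm]
      constructor
      · nlinarith
      · exact hmul
  have hBnorm : ∀ j : ℤ, 0 ≤ j → 1 ≤ ‖B j‖ ∧ (p:ℝ) * ‖B (j-1)‖ ≤ ‖B j‖ := by
    intro j hj
    have := hBnat j.toNat
    rwa [Int.toNat_of_nonneg hj] at this
  -- determinant
  have hDnat : ∀ n : ℕ, ‖A (n:ℤ) * B ((n:ℤ)-1) - A ((n:ℤ)-1) * B (n:ℤ)‖ = 1 := by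
    intro n
    induction n with
    | zero =>
      have hA0 : A 0 = 0 := by
        have h := hArec 0 le_rfl
        norm_num [hb0] at h
        rw [h]; norm_num [hAm2]
      have hB0 : B 0 = 1 := by
        have h := hBrec 0 le_rfl
        norm_num [hb0] at h
        rw [h]; norm_num [hBm2]
      norm_num [hA0, hB0, hAm1, hBm1]
    | succ n ih =>
      set j : ℤ := (n : ℤ)
      have hjnn : 0 ≤ j := Int.ofNat_nonneg n
      have hrecA := hArec (j+1) (by linarith)
      have hrecB := hBrec (j+1) (by linarith)
      have e1 : j + 1 - 1 = j := by ring
      have e2 : j + 1 - 2 = j - 1 := by ring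
      rw [e1, e2] at hrecA hrecB
      have e3 : ((n+1 : ℕ) : ℤ) = j + 1 := by push_cast; ring
      rw [e3, e1]
      have : A (j+1) * B j - A j * B (j+1)
          = -(A j * B (j-1) - A (j-1) * B j) := by
        rw [hrecA, hrecB]; ring
      rw [this, norm_neg, ih]
  have hD : ∀ j : ℤ, 0 ≤ j → ‖A j * B (j-1) - A (j-1) * B j‖ = 1 := by
    intro j hj
    have := hDnat j.toNat
    rwa [Int.toNat_of_nonneg hj] at this
  obtain ⟨hB1, hB2⟩ := hBnorm i hi
  have hBpos : (0:ℝ) < ‖B i‖ := lt_of_lt_of_le one_pos hB1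
  have hγpos : (0:ℝ) < ‖γ‖ := lt_of_lt_of_le hp0 hγ
  have hγ'pos : (0:ℝ) < ‖γ'‖ := lt_of_lt_of_le hp0 hγ'
  -- denominators
  have hdenom : ∀ g : ℚ_[p], (p:ℝ) ≤ ‖g‖ → ‖g * B i + B (i-1)‖ = ‖g‖ * ‖B i‖ := by
    intro g hg
    have hgpos : (0:ℝ) < ‖g‖ := lt_of_lt_of_le hp0 hg
    have hlt : ‖B (i-1)‖ < ‖g * B i‖ := by
      rw [norm_mul]
      nlinarith [norm_nonneg (B (i-1))]
    rw [Padic.add_eq_max_of_ne hlt.ne', max_eq_left hlt.le, norm_mul]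
  have hd : ‖γ * B i + B (i-1)‖ = ‖γ‖ * ‖B i‖ := hdenom γ hγ
  have hd' : ‖γ' * B i + B (i-1)‖ = ‖γ'‖ * ‖B i‖ := hdenom γ' hγ'
  have hdne : γ * B i + B (i-1) ≠ 0 := by
    intro h; rw [h, norm_zero] at hd; nlinarith
  have hdne' : γ' * B i + B (i-1) ≠ 0 := by
    intro h; rw [h, norm_zero] at hd'; nlinarith
  have key : α - β = ((γ - γ') * (A i * B (i-1) - A (i-1) * B i)) /
      ((γ * B i + B (i-1)) * (γ' * B i + B (i-1))) := by
    rw [hα, hβ, div_sub_div _ _ hdne hdne']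
    congr 1
    ring
  have hnormαβ : ‖α - β‖ = ‖γ - γ'‖ / (‖γ‖ * ‖B i‖ * (‖γ'‖ * ‖B i‖)) := by
    rw [key, norm_div, norm_mul, norm_mul, hD i hi, mul_one, hd, hd']
  -- bound on numerator
  have hnum : ‖γ - γ'‖ * p ≤ ‖γ‖ * ‖γ'‖ := by
    have h1 : ‖γ - γ'‖ ≤ max ‖γ‖ ‖γ'‖ := by
      have := Padic.nonarchimedean γ (-γ')
      simpa [sub_eq_add_neg] using this
    rcases max_cases ‖γ‖ ‖γ'‖ with ⟨hm, _⟩ | ⟨hm, _⟩ <;> rw [hm] at h1 <;> nlinarith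
  rw [hnormαβ, div_lt_iff₀ (by positivity)]
  have heq : (‖B i‖ ^ 2)⁻¹ * (‖γ‖ * ‖B i‖ * (‖γ'‖ * ‖B i‖)) = ‖γ‖ * ‖γ'‖ := by
    field_simp
  rw [heq]
  by_contra hcon
  push_neg at hcon
  have h1 : ‖γ - γ'‖ * p ≤ ‖γ - γ'‖ := le_trans hnum hcon
  have h2 : ‖γ - γ'‖ ≤ 0 := by nlinarith [norm_nonneg (γ - γ')]
  nlinarith [mul_le_mul hγ hγ' hp0.le (norm_nonneg γ)]
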